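/- Let K ≥ 1, let α_1,…,α_K ≥ 0 with Σ_k α_k = 1, let 0 ≤ c < θ̄, and for each k let F_k : ℝ → ℝ be nondecreasing with values in [0,1] such that π_k(p) = (p − c)·(1 − F_k(p)) is concave on [0, θ̄]. Suppose for each k there exists p_k* ∈ [c, θ̄] attaining sup_{p ∈ [0,θ̄]} π_k(p). Then max_{j ∈ {1,…,K}} Σ_k α_k·π_k(p_j*) ≥ (1/2)·Σ_k α_k·π_k(p_k*); that is, some per-segment optimal price, used as a uniform price for all segments, earns at least half of the optimal third-degree price-discrimination profit. -/

import Mathlib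

open Finset

/-- Abel-type identity for the rising part. -/
lemma half_sumA (K : ℕ) (x t : ℕ → ℝ) (ht0 : t 0 = 0)
    (htmid : ∀ i, 1 ≤ i → i < K → t i = (x (i-1) + x i) / 2) :
    ∀ m, m < K → ∑ j ∈ range (m+1), (t (j+1) - t j) * x j
      = t (m+1) * x m - (x m ^ 2 - x 0 ^ 2) / 2 := by
  intro m
  induction m with
  | zero => intro _; simp [ht0]
  | succ m ih =>
    intro hm
    rw [Finset.sum_range_succ, ih (by omega)]
    have h1 : t (m+1) = (x m + x (m+1)) / 2 := by
      have := htmid (m+1) (by omega) (by omega)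
      simpa using this
    rw [h1]; ring

/-- Abel-type identity for the falling part. -/
lemma half_sumB (K : ℕ) (T : ℝ) (x t : ℕ → ℝ)
    (htmid : ∀ i, 1 ≤ i → i < K → t i = (x (i-1) + x i) / 2) :
    ∀ k m, k + 1 ≤ m → m < K →
      ∑ j ∈ Finset.Ico (k+1) (m+1), (t (j+1) - t j) * (T - x j)
        = t (m+1) * (T - x m) - t (k+1) * (T - x (k+1)) + (x m ^ 2 - x (k+1) ^ 2) / 2 := by
  intro k m hm
  induction m, hm using Nat.le_induction with
  | base =>
    intro _
    rw [Finset.sum_Ico_succ_top (le_refl (k+1))]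
    simp [Finset.Ico_self]; ring
  | succ m hm ih =>
    intro hmK
    rw [Finset.sum_Ico_succ_top (by omega : k + 1 ≤ m + 1), ih (by omega)]
    have h1 : t (m+1) = (x m + x (m+1)) / 2 := by
      have := htmid (m+1) (by omega) (by omega)
      simpa using this
    rw [h1]; ring

/-- Key pointwise bound: the midpoint-cell weighted average of the "tent"
lower bounds at the peaks is at least half the peak value. -/
lemma half_key (K : ℕ) (T : ℝ) (hT : 0 < T) (x t : ℕ → ℝ)
    (hmono : ∀ i j, i ≤ j → j < K → x i ≤ x j)
    (hx0 : ∀ i, i < K → 0 ≤ x i) (hxT : ∀ i, i < K → x i ≤ T)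
    (ht0 : t 0 = 0) (htK : t K = T)
    (htmid : ∀ i, 1 ≤ i → i < K → t i = (x (i-1) + x i) / 2)
    (htmono : ∀ i, i < K → t i ≤ t (i+1)) :
    ∀ k, k < K → T * x k / 2 ≤ ∑ j ∈ range K,
      (t (j+1) - t j) * (if x j ≤ x k then x j
        else x k * (T - x j) / (T - x k)) := by
  intro k hk
  set ρ : ℕ → ℝ := fun j => (if x j ≤ x k then x j else x k * (T - x j) / (T - x k)) with hρ
  -- split the sum
  have hsplit : ∑ j ∈ range K, (t (j+1) - t j) * ρ j
      = ∑ j ∈ range (k+1), (t (j+1) - t j) * ρ j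
        + ∑ j ∈ Finset.Ico (k+1) K, (t (j+1) - t j) * ρ j := by
    rw [range_eq_Ico, ← Finset.sum_Ico_consecutive _ (by omega : 0 ≤ k+1) (by omega : k+1 ≤ K),
      ← range_eq_Ico]
  have hhead : ∑ j ∈ range (k+1), (t (j+1) - t j) * ρ j
      = t (k+1) * x k - (x k ^ 2 - x 0 ^ 2) / 2 := by
    rw [show ∑ j ∈ range (k+1), (t (j+1) - t j) * ρ j
        = ∑ j ∈ range (k+1), (t (j+1) - t j) * x j from
      Finset.sum_congr rfl fun j hj => by
        have hj' : j ≤ k := by simpa [Nat.lt_succ_iff] using Finset.mem_range.mp hj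
        simp [hρ, if_pos (hmono j k hj' hk)]]
    exact half_sumA K x t ht0 htmid k hk
  rw [hsplit, hhead]
  by_cases hxkT : x k = T
  · -- the largest possible peak value: head alone suffices
    have htail : 0 ≤ ∑ j ∈ Finset.Ico (k+1) K, (t (j+1) - t j) * ρ j := by
      apply Finset.sum_nonneg
      intro j hj
      have hjK : j < K := (Finset.mem_Ico.mp hj).2
      have h1 : x j ≤ x k := by rw [hxkT]; exact hxT j hjK
      have : ρ j = x j := by simp [hρ, if_pos h1]
      rw [this]
      exact mul_nonneg (by linarith [htmono j hjK]) (hx0 j hjK)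
    have htk1 : t (k+1) = T := by
      by_cases hkK : k + 1 = K
      · rw [hkK, htK]
      · have hk1K : k + 1 < K := by omega
        have h1 : x (k+1) = T := le_antisymm (hxT _ hk1K)
          (hxkT ▸ hmono k (k+1) (by omega) hk1K)
        have := htmid (k+1) (by omega) hk1K
        simpa [h1, hxkT] using this
    nlinarith [sq_nonneg (x 0)]
  · have hxkT' : x k < T := lt_of_le_of_ne (hxT k hk) hxkT
    have hne : T - x k ≠ 0 := by intro h; apply hxkT; linarith
    by_cases hkK : k + 1 = K
    · -- k is the last index: head alone suffices
      have htail : ∑ j ∈ Finset.Ico (k+1) K, (t (j+1) - t j) * ρ j = 0 := by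
        rw [hkK, Finset.Ico_self, Finset.sum_empty]
      rw [htail]
      have htk1 : t (k+1) = T := by rw [hkK, htK]
      nlinarith [sq_nonneg (x 0), hx0 k hk]
    · have hk1K : k + 1 < K := by omega
      -- lower bound the tail
      have htail : x k * (T - x (k+1)) / 2
          ≤ ∑ j ∈ Finset.Ico (k+1) K, (t (j+1) - t j) * ρ j := by
        have hstep : ∀ j ∈ Finset.Ico (k+1) K,
            (t (j+1) - t j) * (x k * (T - x j) / (T - x k)) ≤ (t (j+1) - t j) * ρ j := by
          intro j hj
          have hjK : j < K := (Finset.mem_Ico.mp hj).2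
          have hkj : x k ≤ x j := hmono k j (by have := (Finset.mem_Ico.mp hj).1; omega) hjK
          apply mul_le_mul_of_nonneg_left _ (by linarith [htmono j hjK])
          by_cases h1 : x j ≤ x k
          · have hxe : x j = x k := le_antisymm h1 hkj
            rw [hρ]
            simp only [if_pos h1, hxe]
            rw [mul_div_assoc, div_self hne, mul_one]; simp
          · rw [hρ]; simp [if_neg h1]
        calc x k * (T - x (k+1)) / 2
            ≤ x k / (T - x k) * ((T - x (k+1)) * (T - x k) / 2) := le_of_eq (by
              field_simp)
          _ ≤ x k / (T - x k) * ∑ j ∈ Finset.Ico (k+1) K, (t (j+1) - t j) * (T - x j) := by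
              apply mul_le_mul_of_nonneg_left _
                (div_nonneg (hx0 k hk) (by linarith))
              have hB : ∑ j ∈ Finset.Ico (k+1) K, (t (j+1) - t j) * (T - x j)
                  = t K * (T - x (K-1)) - t (k+1) * (T - x (k+1))
                    + (x (K-1) ^ 2 - x (k+1) ^ 2) / 2 := by
                have := half_sumB K T x t htmid k (K-1) (by omega) (by omega)
                rw [show K - 1 + 1 = K by omega] at this
                exact this
              rw [hB, htK]
              have htk1 : t (k+1) = (x k + x (k+1)) / 2 := by
                have := htmid (k+1) (by omega) hk1K
                simpa using this
              rw [htk1]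
              have h1 : x (k+1) ≤ x (K-1) := hmono (k+1) (K-1) (by omega) (by omega)
              have h2 : x (K-1) ≤ T := hxT (K-1) (by omega)
              nlinarith [sq_nonneg (T - x (K-1))]
          _ = ∑ j ∈ Finset.Ico (k+1) K, (t (j+1) - t j) * (x k * (T - x j) / (T - x k)) := by
              rw [Finset.mul_sum]
              exact Finset.sum_congr rfl fun j _ => by ring
          _ ≤ _ := Finset.sum_le_sum hstep
      have htk1 : t (k+1) = (x k + x (k+1)) / 2 := by
        have := htmid (k+1) (by omega) hk1K
        simpa using this
      rw [htk1]
      nlinarith [sq_nonneg (x 0)]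

/-- Core combinatorial lemma: some peak earns at least half of the weighted
peak values, where off-peak segments are only credited their "tent" bounds. -/
lemma half_core (K : ℕ) (hK : 1 ≤ K) (T : ℝ) (hT : 0 < T) (x v : ℕ → ℝ)
    (hmono : ∀ i j, i ≤ j → j < K → x i ≤ x j)
    (hx0 : ∀ i, i < K → 0 ≤ x i) (hxT : ∀ i, i < K → x i ≤ T)
    (hv : ∀ i, 0 ≤ v i) :
    ∃ j, j < K ∧ (1/2) * ∑ k ∈ range K, v k * x k ≤
      ∑ k ∈ range K, v k * (if x j ≤ x k then x j
        else x k * (T - x j) / (T - x k)) := by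
  set t : ℕ → ℝ := fun i => if i = 0 then 0 else if K ≤ i then T else (x (i-1) + x i) / 2
    with htdef
  have ht0 : t 0 = 0 := by simp [htdef]
  have htK : t K = T := by
    simp only [htdef]
    rw [if_neg (by omega : ¬ K = 0), if_pos (le_refl K)]
  have htmid : ∀ i, 1 ≤ i → i < K → t i = (x (i-1) + x i) / 2 := by
    intro i h1 h2
    simp only [htdef]
    rw [if_neg (by omega : ¬ i = 0), if_neg (by omega : ¬ K ≤ i)]
  have htmono : ∀ i, i < K → t i ≤ t (i+1) := by
    intro i hiK
    rcases Nat.eq_zero_or_pos i with rfl | hi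
    · rw [ht0]
      by_cases h1 : K ≤ 1
      · simp [htdef, h1]; positivity
      · rw [htmid 1 le_rfl (by omega)]
        have := hx0 0 (by omega)
        have := hx0 1 (by omega)
        simp only [Nat.sub_self]
        linarith
    · by_cases h1 : i + 1 < K
      · rw [htmid i hi hiK, htmid (i+1) (by omega) h1]
        have h2 : x (i-1) ≤ x i := hmono (i-1) i (by omega) hiK
        have h3 : x i ≤ x (i+1) := hmono i (i+1) (by omega) h1
        have h4 : (i + 1 : ℕ) - 1 = i := by omega
        rw [h4]
        linarith
      · have h2 : i + 1 = K := by omega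
        rw [htmid i hi hiK, h2, htK]
        have := hxT (i-1) (by omega)
        have := hxT i hiK
        linarith
  -- weighted average of governs
  set g : ℕ → ℝ := fun j => ∑ k ∈ range K, v k * (if x j ≤ x k then x j
        else x k * (T - x j) / (T - x k)) with hgdef
  have hkey := half_key K T hT x t hmono hx0 hxT ht0 htK htmid htmono
  have havg : T * ((1/2) * ∑ k ∈ range K, v k * x k)
      ≤ ∑ j ∈ range K, (t (j+1) - t j) * g j := by
    have hswap : ∑ j ∈ range K, (t (j+1) - t j) * g j
        = ∑ k ∈ range K, v k * (∑ j ∈ range K, (t (j+1) - t j) *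
            (if x j ≤ x k then x j else x k * (T - x j) / (T - x k))) := by
      simp only [hgdef, Finset.mul_sum]
      rw [Finset.sum_comm]
      exact Finset.sum_congr rfl fun k _ => Finset.sum_congr rfl fun j _ => by ring
    rw [hswap]
    have h1 : ∀ k ∈ range K, v k * (T * x k / 2)
        ≤ v k * (∑ j ∈ range K, (t (j+1) - t j) *
            (if x j ≤ x k then x j else x k * (T - x j) / (T - x k))) := by
      intro k hkK
      exact mul_le_mul_of_nonneg_left (hkey k (Finset.mem_range.mp hkK)) (hv k)
    calc T * ((1/2) * ∑ k ∈ range K, v k * x k)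
        = ∑ k ∈ range K, v k * (T * x k / 2) := by
          rw [Finset.mul_sum, Finset.mul_sum]
          exact Finset.sum_congr rfl fun k _ => by ring
      _ ≤ _ := Finset.sum_le_sum h1
  by_contra hcon
  push_neg at hcon
  have hlt : ∀ j ∈ range K, g j < (1/2) * ∑ k ∈ range K, v k * x k := by
    intro j hj
    exact hcon j (Finset.mem_range.mp hj)
  have hCsum : ∑ j ∈ range K, (t (j+1) - t j) = T := by
    rw [Finset.sum_range_sub t K, ht0, htK, sub_zero]
  have hCpos : ∃ j ∈ range K, 0 < t (j+1) - t j := by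
    by_contra h
    push_neg at h
    have : ∑ j ∈ range K, (t (j+1) - t j) ≤ 0 := by
      apply Finset.sum_nonpos
      intro j hj
      exact h j hj
    linarith
  obtain ⟨j0, hj0, hj0pos⟩ := hCpos
  have hstrict : ∑ j ∈ range K, (t (j+1) - t j) * g j
      < ∑ j ∈ range K, (t (j+1) - t j) * ((1/2) * ∑ k ∈ range K, v k * x k) := by
    apply Finset.sum_lt_sum
    · intro j hj
      exact mul_le_mul_of_nonneg_left (le_of_lt (hlt j hj))
        (by linarith [htmono j (Finset.mem_range.mp hj)])
    · exact ⟨j0, hj0, by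
        exact mul_lt_mul_of_pos_left (hlt j0 hj0) hj0pos⟩
  rw [← Finset.sum_mul, hCsum] at hstrict
  linarith

/-- **Some per-segment optimal price is a half-approximating uniform price.**
With concave profit functions `π k p = (p - c) * (1 - F k p)` on the common
support `[0, θ̄]` and per-segment optimal prices `pstar k ∈ [c, θ̄]`, some
per-segment optimal price, used as a uniform price for all segments, earns at
least half of the optimal third-degree price-discrimination profit. -/
theorem some_segment_price_half_approximation
    (K : ℕ) (hK : 1 ≤ K) (α : Fin K → ℝ) (hα : ∀ k, 0 ≤ α k)
    (hsum : ∑ k, α k = 1)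
    (c θ : ℝ) (hc : 0 ≤ c) (hcθ : c < θ)
    (F : Fin K → ℝ → ℝ) (hFmono : ∀ k, Monotone (F k))
    (hF0 : ∀ k p, 0 ≤ F k p) (hF1 : ∀ k p, F k p ≤ 1)
    (π : Fin K → ℝ → ℝ) (hπ : ∀ k p, π k p = (p - c) * (1 - F k p))
    (hconc : ∀ k, ConcaveOn ℝ (Set.Icc 0 θ) (π k))
    (pstar : Fin K → ℝ) (hps : ∀ k, pstar k ∈ Set.Icc c θ)
    (hopt : ∀ k, ∀ p ∈ Set.Icc (0:ℝ) θ, π k p ≤ π k (pstar k)) :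
    ∃ j : Fin K, ∑ k, α k * π k (pstar j)
        ≥ (1 / 2) * ∑ k, α k * π k (pstar k) := by
  have hT : (0:ℝ) < θ - c := by linarith
  set T : ℝ := θ - c with hTdef
  set q : Fin K → ℝ := fun k => pstar k - c with hqdef
  set s : Fin K → ℝ := fun k => 1 - F k (pstar k) with hsdef
  set v : Fin K → ℝ := fun k => α k * s k with hvdef
  have hs0 : ∀ k, 0 ≤ s k := fun k => by
    simp only [hsdef]; linarith [hF1 k (pstar k)]
  have hv0 : ∀ k, 0 ≤ v k := fun k => mul_nonneg (hα k) (hs0 k)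
  have hq0 : ∀ k, 0 ≤ q k := fun k => by
    simp only [hqdef]; linarith [(hps k).1]
  have hqT : ∀ k, q k ≤ T := fun k => by
    simp only [hqdef, hTdef]; linarith [(hps k).2]
  set σ := Tuple.sort q with hσdef
  have hσmono : Monotone (q ∘ σ) := Tuple.monotone_sort q
  set xN : ℕ → ℝ := fun i => if h : i < K then q (σ ⟨i, h⟩) else T with hxNdef
  set vN : ℕ → ℝ := fun i => if h : i < K then v (σ ⟨i, h⟩) else 0 with hvNdef
  have hmonoN : ∀ i j, i ≤ j → j < K → xN i ≤ xN j := by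
    intro i j hij hj
    have hi : i < K := lt_of_le_of_lt hij hj
    simp only [hxNdef, dif_pos hi, dif_pos hj]
    exact hσmono (show (⟨i, hi⟩ : Fin K) ≤ ⟨j, hj⟩ from hij)
  have hx0N : ∀ i, i < K → 0 ≤ xN i := fun i hi => by
    simp only [hxNdef, dif_pos hi]; exact hq0 _
  have hxTN : ∀ i, i < K → xN i ≤ T := fun i hi => by
    simp only [hxNdef, dif_pos hi]; exact hqT _
  have hvN0 : ∀ i, 0 ≤ vN i := fun i => by
    by_cases h : i < K
    · simp only [hvNdef, dif_pos h]; exact hv0 _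
    · simp only [hvNdef, dif_neg h]; exact le_refl 0
  obtain ⟨j, hjK, hcore⟩ := half_core K hK T hT xN vN hmonoN hx0N hxTN hvN0
  set j' : Fin K := σ ⟨j, hjK⟩ with hj'def
  refine ⟨j', ?_⟩
  have hxNj : xN j = q j' := by simp only [hxNdef, dif_pos hjK, hj'def]
  -- bridge the two sums
  have hbridge1 : ∑ i ∈ range K, vN i * (if xN j ≤ xN i then xN j
        else xN i * (T - xN j) / (T - xN i))
      = ∑ k : Fin K, v k * (if q j' ≤ q k then q j'
        else q k * (T - q j') / (T - q k)) := by
    rw [← Fin.sum_univ_eq_sum_range (fun i => vN i * (if xN j ≤ xN i then xN j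
        else xN i * (T - xN j) / (T - xN i))) K]
    rw [show ∑ i : Fin K, (vN ↑i * (if xN j ≤ xN ↑i then xN j
        else xN ↑i * (T - xN j) / (T - xN ↑i)))
        = ∑ i : Fin K, (fun k => v k * (if q j' ≤ q k then q j'
            else q k * (T - q j') / (T - q k))) (σ i) from
      Finset.sum_congr rfl fun i _ => by
        simp only [hxNdef, hvNdef, dif_pos i.isLt, dif_pos hjK, Fin.eta, hj'def]]
    exact Equiv.sum_comp σ (fun k => v k * (if q j' ≤ q k then q j'
      else q k * (T - q j') / (T - q k)))
  have hbridge2 : ∑ i ∈ range K, vN i * xN i = ∑ k : Fin K, v k * q k := by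
    rw [← Fin.sum_univ_eq_sum_range (fun i => vN i * xN i) K]
    rw [show ∑ i : Fin K, vN ↑i * xN ↑i
        = ∑ i : Fin K, (fun k => v k * q k) (σ i) from
      Finset.sum_congr rfl fun i _ => by
        simp only [hxNdef, hvNdef, dif_pos i.isLt, Fin.eta]]
    exact Equiv.sum_comp σ (fun k => v k * q k)
  -- per-segment comparison of the tent bound with the true profit
  have hup : ∀ k : Fin K, v k * (if q j' ≤ q k then q j'
        else q k * (T - q j') / (T - q k)) ≤ α k * π k (pstar j') := by
    intro k
    by_cases hle : q j' ≤ q k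
    · rw [if_pos hle]
      have h1 : pstar j' ≤ pstar k := by
        have := hle; simp only [hqdef] at this; linarith
      have h2 : F k (pstar j') ≤ F k (pstar k) := hFmono k h1
      have h3 : c ≤ pstar j' := (hps j').1
      have h4 : s k * (pstar j' - c) ≤ (pstar j' - c) * (1 - F k (pstar j')) := by
        simp only [hsdef]
        nlinarith
      calc v k * q j' = α k * (s k * (pstar j' - c)) := by
            simp only [hvdef, hqdef]; ring
        _ ≤ α k * ((pstar j' - c) * (1 - F k (pstar j'))) :=
            mul_le_mul_of_nonneg_left h4 (hα k)
        _ = α k * π k (pstar j') := by rw [hπ]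
    · rw [if_neg hle]
      push_neg at hle
      have hkj : pstar k < pstar j' := by
        have := hle; simp only [hqdef] at this; linarith
      have hjθ : pstar j' ≤ θ := (hps j').2
      have hdk : 0 < θ - pstar k := by linarith
      set a : ℝ := (θ - pstar j') / (θ - pstar k) with hadef
      set b : ℝ := (pstar j' - pstar k) / (θ - pstar k) with hbdef
      have ha : 0 ≤ a := div_nonneg (by linarith) (le_of_lt hdk)
      have hb : 0 ≤ b := div_nonneg (by linarith) (le_of_lt hdk)
      have hab : a + b = 1 := by
        simp only [hadef, hbdef]
        rw [← add_div]
        rw [show θ - pstar j' + (pstar j' - pstar k) = θ - pstar k by ring]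
        exact div_self (ne_of_gt hdk)
      have hcomb : a • pstar k + b • θ = pstar j' := by
        simp only [hadef, hbdef, smul_eq_mul]
        field_simp
        ring
      have hmem1 : pstar k ∈ Set.Icc (0:ℝ) θ := ⟨le_trans hc (hps k).1, (hps k).2⟩
      have hmem2 : θ ∈ Set.Icc (0:ℝ) θ := ⟨by linarith, le_refl θ⟩
      have hcc := (hconc k).2 hmem1 hmem2 ha hb hab
      rw [hcomb] at hcc
      have hπθ : 0 ≤ π k θ := by
        rw [hπ]
        exact mul_nonneg (by linarith) (by linarith [hF1 k θ])
      have h4 : a * π k (pstar k) ≤ π k (pstar j') := by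
        have hbθ : 0 ≤ b * π k θ := mul_nonneg hb hπθ
        simp only [smul_eq_mul] at hcc
        linarith
      calc v k * (q k * (T - q j') / (T - q k))
          = α k * (a * π k (pstar k)) := by
            rw [hπ]
            simp only [hvdef, hsdef, hqdef, hTdef, hadef]
            rw [show θ - c - (pstar j' - c) = θ - pstar j' by ring,
              show θ - c - (pstar k - c) = θ - pstar k by ring]
            ring
        _ ≤ α k * π k (pstar j') := mul_le_mul_of_nonneg_left h4 (hα k)
  have hpk : ∀ k : Fin K, α k * π k (pstar k) = v k * q k := by
    intro k
    rw [hπ]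
    simp only [hvdef, hsdef, hqdef]
    ring
  rw [ge_iff_le]
  calc (1/2) * ∑ k, α k * π k (pstar k)
      = (1/2) * ∑ k : Fin K, v k * q k := by
        rw [Finset.sum_congr rfl fun k _ => hpk k]
    _ = (1/2) * ∑ i ∈ range K, vN i * xN i := by rw [hbridge2]
    _ ≤ ∑ i ∈ range K, vN i * (if xN j ≤ xN i then xN j
          else xN i * (T - xN j) / (T - xN i)) := hcore
    _ = ∑ k : Fin K, v k * (if q j' ≤ q k then q j'
          else q k * (T - q j') / (T - q k)) := hbridge1
    _ ≤ ∑ k, α k * π k (pstar j') := Finset.sum_le_sum fun k _ => hup k
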